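/- Let n ≥ 1, let p : Fin n → ℝ be a probability vector with p i > 0 for all i, let L : Fin n → ℝ, and let ε > 0 and κ > 0. Then the function A(λ) = λ·ε + (λ+κ) · log (Σ_i p i * exp (L i / (λ+κ))) is convex on [0, ∞). -/

import Mathlib

open Finset Real

/-- Hölder: `Σ u^a v^b ≤ (Σ u)^a (Σ v)^b` for nonneg `u v` and weights `a+b=1`, `a b > 0`. -/
lemma holder_sum_rpow {n : ℕ} (u v : Fin n → ℝ) (hu : ∀ i, 0 ≤ u i) (hv : ∀ i, 0 ≤ v i)
    {a b : ℝ} (ha : 0 < a) (hb : 0 < b) (hab : a + b = 1) :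
    ∑ i, u i ^ a * v i ^ b ≤ (∑ i, u i) ^ a * (∑ i, v i) ^ b := by
  have hpq : Real.HolderConjugate (1 / a) (1 / b) := Real.holderConjugate_one_div ha hb hab
  have h := Real.inner_le_Lp_mul_Lq_of_nonneg (Finset.univ (α := Fin n))
      (f := fun i => u i ^ a) (g := fun i => v i ^ b) hpq
      (fun i _ => Real.rpow_nonneg (hu i) a) (fun i _ => Real.rpow_nonneg (hv i) b)
  have e1 : ∀ i : Fin n, (u i ^ a) ^ (1 / a) = u i := fun i => by
    rw [← Real.rpow_mul (hu i), mul_one_div, div_self ha.ne', Real.rpow_one]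
  have e2 : ∀ i : Fin n, (v i ^ b) ^ (1 / b) = v i := fun i => by
    rw [← Real.rpow_mul (hv i), mul_one_div, div_self hb.ne', Real.rpow_one]
  simp only [e1, e2] at h
  calc ∑ i, u i ^ a * v i ^ b
      ≤ (∑ i, u i) ^ (1 / (1/a)) * (∑ i, v i) ^ (1 / (1/b)) := h
    _ = (∑ i, u i) ^ a * (∑ i, v i) ^ b := by rw [one_div_one_div, one_div_one_div]

/-- Convexity of log-sum-exp `x ↦ log Σᵢ pᵢ e^{Lᵢ x}`. -/
lemma convexOn_log_sum_exp {n : ℕ} (hn : 0 < n) (p : Fin n → ℝ) (hp_pos : ∀ i, 0 < p i)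
    (L : Fin n → ℝ) :
    ConvexOn ℝ Set.univ (fun x : ℝ => Real.log (∑ i, p i * Real.exp (L i * x))) := by
  have hS : ∀ x : ℝ, 0 < ∑ i, p i * Real.exp (L i * x) := fun x =>
    Finset.sum_pos (fun i _ => mul_pos (hp_pos i) (Real.exp_pos _)) ⟨⟨0, hn⟩, Finset.mem_univ _⟩
  refine ⟨convex_univ, fun x _ y _ a b ha hb hab => ?_⟩
  rcases ha.eq_or_lt with rfl | ha'
  · simp at hab; simp [hab]
  rcases hb.eq_or_lt with rfl | hb'
  · simp at hab; simp [hab]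
  have key : ∑ i, p i * Real.exp (L i * (a • x + b • y))
      ≤ (∑ i, p i * Real.exp (L i * x)) ^ a * (∑ i, p i * Real.exp (L i * y)) ^ b := by
    have := holder_sum_rpow (fun i => p i * Real.exp (L i * x))
        (fun i => p i * Real.exp (L i * y))
        (fun i => le_of_lt (mul_pos (hp_pos i) (Real.exp_pos _)))
        (fun i => le_of_lt (mul_pos (hp_pos i) (Real.exp_pos _))) ha' hb' hab
    refine le_trans (le_of_eq (Finset.sum_congr rfl fun i _ => ?_)) this
    have hpi := (hp_pos i).le
    simp only [smul_eq_mul]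
    rw [Real.mul_rpow hpi (Real.exp_pos _).le, Real.mul_rpow hpi (Real.exp_pos _).le,
      ← Real.exp_mul, ← Real.exp_mul,
      mul_mul_mul_comm, ← Real.rpow_add (hp_pos i), hab, Real.rpow_one, ← Real.exp_add]
    ring_nf
  calc Real.log (∑ i, p i * Real.exp (L i * (a • x + b • y)))
      ≤ Real.log ((∑ i, p i * Real.exp (L i * x)) ^ a * (∑ i, p i * Real.exp (L i * y)) ^ b) :=
        Real.log_le_log (hS _) key
    _ = a * Real.log (∑ i, p i * Real.exp (L i * x))
        + b * Real.log (∑ i, p i * Real.exp (L i * y)) := by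
        rw [Real.log_mul (Real.rpow_pos_of_pos (hS x) a).ne' (Real.rpow_pos_of_pos (hS y) b).ne',
          Real.log_rpow (hS x), Real.log_rpow (hS y)]
    _ = a • Real.log (∑ i, p i * Real.exp (L i * x))
        + b • Real.log (∑ i, p i * Real.exp (L i * y)) := by simp

theorem kl_dual_objective_convex (n : ℕ) (hn : 1 ≤ n) (p : Fin n → ℝ)
    (hp_pos : ∀ i, 0 < p i) (hp_sum : ∑ i, p i = 1)
    (L : Fin n → ℝ) (ε κ : ℝ) (hε : 0 < ε) (hκ : 0 < κ) :
    ConvexOn ℝ (Set.Ici (0 : ℝ))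
      (fun lam : ℝ =>
        lam * ε + (lam + κ) * Real.log (∑ i, p i * Real.exp (L i / (lam + κ)))) := by
  have hf := convexOn_log_sum_exp hn p hp_pos L
  set f : ℝ → ℝ := fun x : ℝ => Real.log (∑ i, p i * Real.exp (L i * x)) with hfdef
  have hfeq : ∀ t : ℝ, Real.log (∑ i, p i * Real.exp (L i / t)) = f (1 / t) := by
    intro t; simp only [hfdef, mul_one_div]
  refine ⟨convex_Ici 0, fun x hx y hy a b ha hb hab => ?_⟩
  simp only [smul_eq_mul]
  rcases ha.eq_or_lt with rfl | ha'
  · simp only [zero_add] at hab; subst hab; norm_num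
  rcases hb.eq_or_lt with rfl | hb'
  · simp only [add_zero] at hab; subst hab; norm_num
  simp only [hfeq]
  have hx0 : (0:ℝ) ≤ x := hx
  have hy0 : (0:ℝ) ≤ y := hy
  have ht1 : 0 < x + κ := by linarith
  have ht2 : 0 < y + κ := by linarith
  have ht : 0 < a * x + b * y + κ := by nlinarith
  have htsum : a * x + b * y + κ = a * (x + κ) + b * (y + κ) := by nlinarith
  have hw1n : 0 ≤ a * (x + κ) / (a * x + b * y + κ) := by positivity
  have hw2n : 0 ≤ b * (y + κ) / (a * x + b * y + κ) := by positivity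
  have hwsum : a * (x + κ) / (a * x + b * y + κ) + b * (y + κ) / (a * x + b * y + κ) = 1 := by
    rw [← add_div, ← htsum, div_self ht.ne']
  have hconv := hf.2 (Set.mem_univ (1 / (x + κ))) (Set.mem_univ (1 / (y + κ))) hw1n hw2n hwsum
  simp only [smul_eq_mul] at hconv
  have harg : a * (x + κ) / (a * x + b * y + κ) * (1 / (x + κ))
      + b * (y + κ) / (a * x + b * y + κ) * (1 / (y + κ)) = 1 / (a * x + b * y + κ) := by
    rw [div_mul_div_comm, div_mul_div_comm, mul_one, mul_one,
      mul_comm (a * x + b * y + κ) (x + κ), mul_comm (a * x + b * y + κ) (y + κ),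
      mul_comm a (x + κ), mul_comm b (y + κ),
      mul_div_mul_left _ _ ht1.ne', mul_div_mul_left _ _ ht2.ne',
      ← add_div, hab]
  rw [harg] at hconv
  have hmul := mul_le_mul_of_nonneg_left hconv ht.le
  have hexp : (a * x + b * y + κ) * (a * (x + κ) / (a * x + b * y + κ) * f (1 / (x + κ))
      + b * (y + κ) / (a * x + b * y + κ) * f (1 / (y + κ)))
      = a * ((x + κ) * f (1 / (x + κ))) + b * ((y + κ) * f (1 / (y + κ))) := by
    field_simp
  rw [hexp] at hmul
  nlinarith [hmul]
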